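/- Radial weighted Hardy–Poincaré inequality (mode k = 2): For every C¹ function v : (0,1) → ℝ such that ∫₀¹ [ (1−r²) v′(r)² + (2N/r²) v(r)² ] (1−r²)^α r^{N−1} dr < ∞, one has ∫₀¹ [ (1−r²) v′(r)² + (2N/r²) v(r)² ] (1−r²)^α r^{N−1} dr ≥ (2(3p+1)/(p−1)) ∫₀¹ v(r)² (1−r²)^α r^{N−1} dr. -/

import Mathlib

open MeasureTheory

noncomputable section

/-- The exponent `α = 2/(p−1) − (N−1)/2`. -/
def alphaExp (N : ℕ) (p : ℝ) : ℝ := 2 / (p - 1) - ((N : ℝ) - 1) / 2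

open Set

set_option maxHeartbeats 2000000

lemma aux_exists_small {h : ℝ → ℝ} {t : ℝ} (ht : 0 < t)
    (hh : IntegrableOn h (Set.Ioo 0 t))
    (ε : ℝ) (hε : 0 < ε) :
    ∃ a ∈ Set.Ioo (0:ℝ) (min t ε), a * h a < ε := by
  by_contra hcon
  push_neg at hcon
  set t' := min t ε with ht'
  have ht'0 : 0 < t' := lt_min ht hε
  have ht't : Ioo (0:ℝ) t' ⊆ Ioo 0 t := Ioo_subset_Ioo le_rfl (min_le_left _ _)
  have hh' : IntegrableOn h (Ioo 0 t') := hh.mono_set ht't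
  have hbound : ∀ᵐ a ∂(volume.restrict (Ioo (0:ℝ) t')), ‖ε * a⁻¹‖ ≤ h a := by
    rw [ae_restrict_iff' measurableSet_Ioo]
    filter_upwards with a ha
    have ha0 : 0 < a := ha.1
    have h1 : ε ≤ a * h a := hcon a ha
    have : ε * a⁻¹ ≤ h a := by
      rw [mul_inv_le_iff₀ ha0]
      linarith [h1, mul_comm a (h a)]
    rw [Real.norm_eq_abs, abs_of_pos (by positivity)]
    exact this
  have hmeas : AEStronglyMeasurable (fun a : ℝ => ε * a⁻¹)
      (volume.restrict (Ioo (0:ℝ) t')) :=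
    (measurable_const.mul measurable_inv).aestronglyMeasurable
  have hint2 : IntegrableOn (fun a : ℝ => ε * a⁻¹) (Ioo 0 t') := by
    exact Integrable.mono' hh' hmeas hbound
  have hint3 : IntegrableOn (fun a : ℝ => a ^ (-1:ℝ)) (Ioo (0:ℝ) t') := by
    have h2 : IntegrableOn (fun a : ℝ => ε⁻¹ * (ε * a⁻¹)) (Ioo (0:ℝ) t') :=
      hint2.const_mul ε⁻¹
    refine IntegrableOn.congr_fun h2 (fun a ha => ?_) measurableSet_Ioo
    rw [Real.rpow_neg_one]
    field_simp
  rw [intervalIntegral.integrableOn_Ioo_rpow_iff ht'0] at hint3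
  linarith

lemma aux_hasDeriv_G (α n : ℝ) (v : ℝ → ℝ) (r : ℝ) (hr : 0 < r) (hr1 : r < 1)
    (dv : ℝ) (hv : HasDerivAt v dv r) :
    HasDerivAt (fun s => 2 * (1 - s^2) ^ (α+1) * s ^ (n-2) * v s ^ 2)
      ( ((1 - r^2) * dv^2 + 2*n/r^2 * v r^2) * (1-r^2)^α * r^(n-1)
        - (4*α + 2*n + 4) * (v r^2 * (1-r^2)^α * r^(n-1))
        - (1-r^2) * (dv - 2*(v r)/r)^2 * ((1-r^2)^α * r^(n-1)) ) r := by
  have h1 : (0:ℝ) < 1 - r^2 := by nlinarith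
  have hbase : HasDerivAt (fun s : ℝ => 1 - s^2) (-(2*r)) r := by
    simpa using ((hasDerivAt_pow 2 r).const_sub 1)
  have hA : HasDerivAt (fun s : ℝ => (1 - s^2) ^ (α+1))
      (-(2*r) * (α+1) * (1-r^2)^(α+1-1)) r :=
    hbase.rpow_const (Or.inl h1.ne')
  have hB : HasDerivAt (fun s : ℝ => s ^ (n-2)) ((n-2) * r^(n-2-1)) r :=
    Real.hasDerivAt_rpow_const (Or.inl hr.ne')
  have hV : HasDerivAt (fun s => v s ^ 2) (2 * v r ^ 1 * dv) r := hv.pow 2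
  have hprod := (((hA.const_mul 2).mul hB).mul hV)
  convert hprod using 1
  · rfl
  · rfl
  · rfl
  have e1 : (1-r^2)^(α+1) = (1-r^2)^α * (1-r^2) := by
    rw [Real.rpow_add_one h1.ne']
  have e2 : (1-r^2)^(α+1-1) = (1-r^2)^α := by norm_num
  have e3 : r ^ (n-2) = r^(n-3) * r := by
    rw [← Real.rpow_add_one hr.ne']; ring_nf
  have e4 : r ^ (n-2-1) = r^(n-3) := by rw [show n-2-1 = n-3 by ring]
  have e5 : r ^ (n-1) = r^(n-3) * r * r := by
    rw [← Real.rpow_add_one hr.ne', ← Real.rpow_add_one hr.ne']; ring_nf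
  simp only [Pi.mul_apply]
  rw [e1, e2, e3, e4, e5]
  field_simp
  ring


lemma aux_left_tail (f : ℝ → ℝ) (hf : IntegrableOn f (Set.Ioo (0:ℝ) 1))
    (ε : ℝ) (hε : 0 < ε) :
    ∃ δ : ℝ, 0 < δ ∧ δ ≤ 1/2 ∧ (∫ r in Set.Ioc (0:ℝ) δ, |f r|) < ε := by
  have habs : IntegrableOn (fun r => |f r|) (Set.Ioo (0:ℝ) 1) := hf.abs
  set s : ℕ → Set ℝ := fun n => Ioc (0:ℝ) (1/(2*((n:ℝ)+1))) with hs
  have hpos : ∀ n : ℕ, (0:ℝ) < 1/(2*((n:ℝ)+1)) := by intro n; positivity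
  have hle : ∀ n : ℕ, 1/(2*((n:ℝ)+1)) ≤ 1/2 := by
    intro n
    apply one_div_le_one_div_of_le (by norm_num)
    have : (0:ℝ) ≤ (n:ℝ) := n.cast_nonneg
    linarith
  have hanti : Antitone s := by
    intro m k hmk
    apply Ioc_subset_Ioc le_rfl
    apply one_div_le_one_div_of_le (by positivity)
    have : (m:ℝ) ≤ (k:ℝ) := Nat.cast_le.mpr hmk
    linarith
  have hinter : (⋂ n, s n) = ∅ := by
    ext x
    simp only [mem_iInter, mem_empty_iff_false, iff_false]
    intro hx
    have hx0 : 0 < x := (hx 0).1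
    obtain ⟨m, hm⟩ := exists_nat_gt (1/x)
    have h1 : x ≤ 1/(2*((m:ℝ)+1)) := (hx m).2
    have h2 : 1/x < m := hm
    have h3 : 1 < x * m := by
      rw [div_lt_iff₀ hx0] at h2; linarith
    have h4 : x * (2*((m:ℝ)+1)) ≤ 1 := by
      rw [le_div_iff₀ (by positivity)] at h1; linarith
    nlinarith [hx0, Nat.cast_nonneg (α := ℝ) m]
  have htend : Filter.Tendsto (fun n => ∫ r in s n, |f r|) Filter.atTop (nhds 0) := by
    have := tendsto_setIntegral_of_antitone (f := fun r => |f r|) (μ := volume)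
      (fun n => measurableSet_Ioc) hanti
      ⟨0, habs.mono_set (by
        intro x hx
        exact ⟨hx.1, lt_of_le_of_lt hx.2 (by norm_num)⟩)⟩
    rwa [hinter, Measure.restrict_empty, integral_zero_measure] at this
  have := htend.eventually (gt_mem_nhds hε)
  obtain ⟨n, hn⟩ := this.exists
  exact ⟨1/(2*((n:ℝ)+1)), hpos n, hle n, hn⟩

lemma aux_right_tail (f : ℝ → ℝ) (hf : IntegrableOn f (Set.Ioo (0:ℝ) 1))
    (ε : ℝ) (hε : 0 < ε) :
    ∃ b : ℝ, 1/2 ≤ b ∧ b < 1 ∧ (∫ r in Set.Ico b 1, |f r|) < ε := by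
  have habs : IntegrableOn (fun r => |f r|) (Set.Ioo (0:ℝ) 1) := hf.abs
  set s : ℕ → Set ℝ := fun n => Ico (1 - 1/(2*((n:ℝ)+1))) (1:ℝ) with hs
  have hpos : ∀ n : ℕ, (0:ℝ) < 1/(2*((n:ℝ)+1)) := by intro n; positivity
  have hle : ∀ n : ℕ, 1/(2*((n:ℝ)+1)) ≤ 1/2 := by
    intro n
    apply one_div_le_one_div_of_le (by norm_num)
    have : (0:ℝ) ≤ (n:ℝ) := n.cast_nonneg
    linarith
  have hanti : Antitone s := by
    intro m k hmk
    apply Ico_subset_Ico _ le_rfl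
    have h : 1/(2*((k:ℝ)+1)) ≤ 1/(2*((m:ℝ)+1)) := by
      apply one_div_le_one_div_of_le (by positivity)
      have : (m:ℝ) ≤ (k:ℝ) := Nat.cast_le.mpr hmk
      linarith
    linarith
  have hinter : (⋂ n, s n) = ∅ := by
    ext x
    simp only [mem_iInter, mem_empty_iff_false, iff_false]
    intro hx
    have hx1 : x < 1 := (hx 0).2
    have hx0 : 0 < 1 - x := by linarith
    obtain ⟨m, hm⟩ := exists_nat_gt (1/(1-x))
    have h1 : 1 - 1/(2*((m:ℝ)+1)) ≤ x := (hx m).1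
    have h2 : 1/(1-x) < m := hm
    have h3 : 1 < (1-x) * m := by
      rw [div_lt_iff₀ hx0] at h2; linarith
    have h4 : 1 - x ≤ 1/(2*((m:ℝ)+1)) := by linarith
    have h5 : (1-x) * (2*((m:ℝ)+1)) ≤ 1 := by
      rw [le_div_iff₀ (by positivity)] at h4; linarith
    nlinarith [Nat.cast_nonneg (α := ℝ) m]
  have htend : Filter.Tendsto (fun n => ∫ r in s n, |f r|) Filter.atTop (nhds 0) := by
    have := tendsto_setIntegral_of_antitone (f := fun r => |f r|) (μ := volume)
      (fun n => measurableSet_Ico) hanti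
      ⟨0, habs.mono_set (by
        intro x hx
        refine ⟨lt_of_lt_of_le ?_ hx.1, hx.2⟩
        norm_num)⟩
    rwa [hinter, Measure.restrict_empty, integral_zero_measure] at this
  have := htend.eventually (gt_mem_nhds hε)
  obtain ⟨n, hn⟩ := this.exists
  exact ⟨1 - 1/(2*((n:ℝ)+1)), by linarith [hle n], by linarith [hpos n], hn⟩
/-- Radial weighted Hardy–Poincaré inequality (mode k = 2). -/
theorem stmt11 (N : ℕ) (p : ℝ) (hN : 1 ≤ N) (hp1 : 1 < p)
    (hpc : 2 ≤ N → p < 1 + 4 / ((N : ℝ) - 1))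
    (v : ℝ → ℝ) (hv : ContDiffOn ℝ 1 v (Set.Ioo (0 : ℝ) 1))
    (hint : IntegrableOn
      (fun r => ((1 - r ^ 2) * deriv v r ^ 2 + 2 * (N : ℝ) / r ^ 2 * v r ^ 2) *
        (1 - r ^ 2) ^ alphaExp N p * r ^ ((N : ℝ) - 1)) (Set.Ioo (0 : ℝ) 1)) :
    2 * (3 * p + 1) / (p - 1) *
        ∫ r in Set.Ioo (0 : ℝ) 1,
          v r ^ 2 * (1 - r ^ 2) ^ alphaExp N p * r ^ ((N : ℝ) - 1)
      ≤ ∫ r in Set.Ioo (0 : ℝ) 1,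
          ((1 - r ^ 2) * deriv v r ^ 2 + 2 * (N : ℝ) / r ^ 2 * v r ^ 2) *
            (1 - r ^ 2) ^ alphaExp N p * r ^ ((N : ℝ) - 1) := by
  have hp1' : p - 1 ≠ 0 := sub_ne_zero.mpr (ne_of_gt hp1)
  have hN1 : (1:ℝ) ≤ (N:ℝ) := by exact_mod_cast hN
  set α : ℝ := alphaExp N p with hαdef
  set C : ℝ := 2 * (3 * p + 1) / (p - 1) with hCdef
  have hC : C = 4 * α + 2 * (N:ℝ) + 4 := by
    rw [hCdef, hαdef, alphaExp]; field_simp; ring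
  -- function abbreviations
  set Q : ℝ → ℝ := fun r => v r ^ 2 * (1 - r ^ 2) ^ α * r ^ ((N : ℝ) - 1) with hQdef
  set F₁ : ℝ → ℝ := fun r => ((1 - r ^ 2) * deriv v r ^ 2 + 2 * (N : ℝ) / r ^ 2 * v r ^ 2) *
      (1 - r ^ 2) ^ α * r ^ ((N : ℝ) - 1) with hF₁def
  set S : ℝ → ℝ := fun r => (1 - r^2) * (deriv v r - 2 * v r / r)^2 *
      ((1 - r^2) ^ α * r ^ ((N:ℝ)-1)) with hSdef
  set G : ℝ → ℝ := fun r => 2 * (1 - r^2) ^ (α + 1) * r ^ ((N:ℝ)-2) * v r ^ 2 with hGdef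
  set H : ℝ → ℝ := fun r => 2 * (N:ℝ) / r^2 * v r^2 * (1 - r^2) ^ α * r ^ ((N:ℝ)-1) with hHdef
  set F : ℝ → ℝ := fun r => F₁ r - C * Q r with hFdef
  -- basic pointwise facts
  have hfacts : ∀ r ∈ Ioo (0:ℝ) 1, 0 < r ∧ r < 1 ∧ 0 < 1 - r^2 ∧
      0 ≤ (1 - r^2) ^ α ∧ 0 ≤ r ^ ((N:ℝ)-1) := by
    intro r hr
    have h1 : 0 < 1 - r^2 := by nlinarith [hr.1, hr.2]
    exact ⟨hr.1, hr.2, h1, Real.rpow_nonneg h1.le _, Real.rpow_nonneg hr.1.le _⟩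
  -- continuity facts
  have hcv : ContinuousOn v (Ioo 0 1) := hv.continuousOn
  have hcdv : ContinuousOn (deriv v) (Ioo (0:ℝ) 1) := by
    have h := hv.continuousOn_derivWithin isOpen_Ioo.uniqueDiffOn le_rfl
    exact h.congr fun r hr => (derivWithin_of_isOpen isOpen_Ioo hr).symm
  have hcA : ContinuousOn (fun r : ℝ => (1 - r^2) ^ α) (Ioo 0 1) := by
    apply ContinuousOn.rpow_const (by fun_prop)
    intro r hr; exact Or.inl (ne_of_gt (hfacts r hr).2.2.1)
  have hcR : ContinuousOn (fun r : ℝ => r ^ ((N:ℝ)-1)) (Ioo 0 1) := by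
    apply ContinuousOn.rpow_const continuousOn_id
    intro r hr; exact Or.inl (ne_of_gt hr.1)
  have hr2ne : ∀ r ∈ Ioo (0:ℝ) 1, r^2 ≠ 0 := fun r hr => pow_ne_zero _ (ne_of_gt hr.1)
  have hrne : ∀ r ∈ Ioo (0:ℝ) 1, r ≠ 0 := fun r hr => ne_of_gt hr.1
  have hcQ : ContinuousOn Q (Ioo 0 1) := ((hcv.pow 2).mul hcA).mul hcR
  have hcF₁ : ContinuousOn F₁ (Ioo 0 1) := by
    apply ContinuousOn.mul _ hcR
    apply ContinuousOn.mul _ hcA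
    exact ((by fun_prop : ContinuousOn (fun r : ℝ => 1 - r^2) (Ioo 0 1)).mul (hcdv.pow 2)).add
      (((continuousOn_const.div (by fun_prop) hr2ne)).mul (hcv.pow 2))
  have hcS : ContinuousOn S (Ioo 0 1) := by
    apply ContinuousOn.mul _ (hcA.mul hcR)
    exact (by fun_prop : ContinuousOn (fun r : ℝ => 1 - r^2) (Ioo 0 1)).mul
      ((hcdv.sub ((continuousOn_const.mul hcv).div continuousOn_id hrne)).pow 2)
  have hcH : ContinuousOn H (Ioo 0 1) := by
    apply ContinuousOn.mul _ hcR
    apply ContinuousOn.mul _ hcA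
    exact (continuousOn_const.div (by fun_prop) hr2ne).mul (hcv.pow 2)
  have hcF : ContinuousOn F (Ioo 0 1) := hcF₁.sub (continuousOn_const.mul hcQ)
  -- pointwise bounds
  have hQnn : ∀ r ∈ Ioo (0:ℝ) 1, 0 ≤ Q r := by
    intro r hr
    obtain ⟨h0, h1, h2, h3, h4⟩ := hfacts r hr
    exact mul_nonneg (mul_nonneg (pow_two_nonneg _) h3) h4
  have hQleF₁ : ∀ r ∈ Ioo (0:ℝ) 1, Q r ≤ F₁ r := by
    intro r hr
    obtain ⟨h0, h1, h2, h3, h4⟩ := hfacts r hr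
    apply mul_le_mul_of_nonneg_right _ h4
    apply mul_le_mul_of_nonneg_right _ h3
    have h2N : (1:ℝ) ≤ 2*(N:ℝ)/r^2 := by
      rw [le_div_iff₀ (by positivity)]; nlinarith
    nlinarith [sq_nonneg (deriv v r), pow_two_nonneg (v r),
      mul_le_mul_of_nonneg_right h2N (pow_two_nonneg (v r))]
  have hHnn : ∀ r ∈ Ioo (0:ℝ) 1, 0 ≤ H r := by
    intro r hr
    obtain ⟨h0, h1, h2, h3, h4⟩ := hfacts r hr
    have : (0:ℝ) ≤ 2*(N:ℝ)/r^2 := by positivity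
    exact mul_nonneg (mul_nonneg (mul_nonneg this (pow_two_nonneg _)) h3) h4
  have hHleF₁ : ∀ r ∈ Ioo (0:ℝ) 1, H r ≤ F₁ r := by
    intro r hr
    obtain ⟨h0, h1, h2, h3, h4⟩ := hfacts r hr
    apply mul_le_mul_of_nonneg_right _ h4
    apply mul_le_mul_of_nonneg_right _ h3
    nlinarith [sq_nonneg (deriv v r)]
  have hSnn : ∀ r ∈ Ioo (0:ℝ) 1, 0 ≤ S r := by
    intro r hr
    obtain ⟨h0, h1, h2, h3, h4⟩ := hfacts r hr
    exact mul_nonneg (mul_nonneg h2.le (sq_nonneg _)) (mul_nonneg h3 h4)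
  have hGnn : ∀ r ∈ Ioo (0:ℝ) 1, 0 ≤ G r := by
    intro r hr
    obtain ⟨h0, h1, h2, h3, h4⟩ := hfacts r hr
    have : (0:ℝ) ≤ (1 - r^2) ^ (α+1) := Real.rpow_nonneg h2.le _
    have : (0:ℝ) ≤ r ^ ((N:ℝ)-2) := Real.rpow_nonneg h0.le _
    positivity
  -- integrability
  have hQint : IntegrableOn Q (Ioo (0:ℝ) 1) := by
    apply Integrable.mono' hint (hcQ.aestronglyMeasurable measurableSet_Ioo)
    rw [ae_restrict_iff' measurableSet_Ioo]
    filter_upwards with r hr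
    rw [Real.norm_eq_abs, abs_of_nonneg (hQnn r hr)]
    exact hQleF₁ r hr
  have hHint : IntegrableOn H (Ioo (0:ℝ) 1) := by
    apply Integrable.mono' hint (hcH.aestronglyMeasurable measurableSet_Ioo)
    rw [ae_restrict_iff' measurableSet_Ioo]
    filter_upwards with r hr
    rw [Real.norm_eq_abs, abs_of_nonneg (hHnn r hr)]
    exact hHleF₁ r hr
  have hFint : IntegrableOn F (Ioo (0:ℝ) 1) := hint.sub (hQint.const_mul C)
  -- derivative of G
  have hvd : ∀ r ∈ Ioo (0:ℝ) 1, HasDerivAt v (deriv v r) r := fun r hr =>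
    ((hv.differentiableOn one_ne_zero).differentiableAt (isOpen_Ioo.mem_nhds hr)).hasDerivAt
  have hG' : ∀ r ∈ Ioo (0:ℝ) 1, HasDerivAt G (F r - S r) r := by
    intro r hr
    have hd := aux_hasDeriv_G α (N:ℝ) v r hr.1 hr.2 (deriv v r) (hvd r hr)
    have heq : F r - S r =
        ((1 - r^2) * deriv v r^2 + 2*(N:ℝ)/r^2 * v r^2) * (1-r^2)^α * r^((N:ℝ)-1)
        - (4*α + 2*(N:ℝ) + 4) * (v r^2 * (1-r^2)^α * r^((N:ℝ)-1))
        - (1-r^2) * (deriv v r - 2*(v r)/r)^2 * ((1-r^2)^α * r^((N:ℝ)-1)) := by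
      simp only [hFdef, hF₁def, hQdef, hSdef, hC]; try ring
    rw [heq]
    exact hd
  -- FTC on compact subintervals
  have key : ∀ a b : ℝ, a ∈ Ioo (0:ℝ) 1 → b ∈ Ioo (0:ℝ) 1 → a < b →
      -(G a) ≤ ∫ r in Ioo a b, F r := by
    intro a b ha hb hab
    have hsub : Icc a b ⊆ Ioo (0:ℝ) 1 :=
      fun x hx => ⟨lt_of_lt_of_le ha.1 hx.1, lt_of_le_of_lt hx.2 hb.2⟩
    have hderI : ∀ x ∈ uIcc a b, HasDerivAt G (F x - S x) x := by
      intro x hx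
      rw [uIcc_of_le hab.le] at hx
      exact hG' x (hsub hx)
    have hii : IntervalIntegrable (fun r => F r - S r) volume a b := by
      apply ContinuousOn.intervalIntegrable
      rw [uIcc_of_le hab.le]
      exact (hcF.sub hcS).mono hsub
    have hftc := intervalIntegral.integral_eq_sub_of_hasDerivAt hderI hii
    rw [intervalIntegral.integral_of_le hab.le, integral_Ioc_eq_integral_Ioo] at hftc
    have hSint : IntegrableOn S (Ioo a b) :=
      ((hcS.mono hsub).integrableOn_Icc).mono_set Ioo_subset_Icc_self
    have hDint : IntegrableOn (fun r => F r - S r) (Ioo a b) :=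
      (((hcF.sub hcS).mono hsub).integrableOn_Icc).mono_set Ioo_subset_Icc_self
    have hsplit : ∫ r in Ioo a b, F r
        = (∫ r in Ioo a b, (F r - S r)) + ∫ r in Ioo a b, S r := by
      rw [← integral_add hDint hSint]
      congr 1; funext r; ring
    have hSnn' : 0 ≤ ∫ r in Ioo a b, S r :=
      setIntegral_nonneg measurableSet_Ioo
        (fun x hx => hSnn x (hsub ⟨hx.1.le, hx.2.le⟩))
    have hGb : 0 ≤ G b := hGnn b hb
    rw [hsplit, hftc]
    linarith
  -- epsilon argument
  have main : ∀ ε : ℝ, 0 < ε → -(3*ε) ≤ ∫ r in Ioo (0:ℝ) 1, F r := by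
    intro ε hε
    obtain ⟨δ, hδ0, hδhalf, hδ⟩ := aux_left_tail F hFint ε hε
    obtain ⟨b, hbhalf, hb1, hbtail⟩ := aux_right_tail F hFint ε hε
    have hδ1 : δ < 1 := by linarith
    have hHδ : IntegrableOn H (Ioo 0 δ) :=
      hHint.mono_set (Ioo_subset_Ioo le_rfl hδ1.le)
    obtain ⟨a, ha, hha⟩ := aux_exists_small hδ0 hHδ ε hε
    have ha0 : 0 < a := ha.1
    have haδ : a < δ := lt_of_lt_of_le ha.2 (min_le_left _ _)
    have hab : a < b := by linarith
    have ha1 : a < 1 := by linarith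
    have hb0 : 0 < b := by linarith
    have haI : a ∈ Ioo (0:ℝ) 1 := ⟨ha0, ha1⟩
    have hbI : b ∈ Ioo (0:ℝ) 1 := ⟨hb0, hb1⟩
    -- G a ≤ a * H a
    have hGa : G a ≤ a * H a := by
      obtain ⟨h0, h1, h2, h3, h4⟩ := hfacts a haI
      have e1 : (1-a^2)^(α+1) = (1-a^2)^α * (1-a^2) := Real.rpow_add_one h2.ne' α
      have e2 : a ^ ((N:ℝ)-1) = a^((N:ℝ)-2) * a := by
        rw [← Real.rpow_add_one h0.ne']; ring_nf
      have e3 : 0 ≤ a ^ ((N:ℝ)-2) := Real.rpow_nonneg h0.le _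
      have ha2 : a^2 ≠ 0 := pow_ne_zero _ h0.ne'
      have erhs : a * (2*(N:ℝ)/a^2 * v a^2 * (1-a^2)^α * a^((N:ℝ)-1))
          = 2*(N:ℝ) * (v a^2 * (1-a^2)^α * a^((N:ℝ)-2)) := by
        rw [e2]; field_simp
      simp only [hGdef, hHdef]
      rw [erhs, e1]
      nlinarith [mul_le_mul_of_nonneg_right (show 1-a^2 ≤ (N:ℝ) by nlinarith)
        (show (0:ℝ) ≤ v a^2*(1-a^2)^α*a^((N:ℝ)-2) by positivity)]
    have hGaε : G a < ε := lt_of_le_of_lt hGa hha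
    -- decomposition of the integral
    have h1set : Ioo (0:ℝ) 1 = Ioc 0 a ∪ (Ioo a b ∪ Ico b 1) := by
      rw [Ioo_union_Ico_eq_Ioo hab hb1.le, Ioc_union_Ioo_eq_Ioo ha0.le ha1]
    have hFa : IntegrableOn F (Ioc 0 a) := hFint.mono_set
      (fun x hx => ⟨hx.1, lt_of_le_of_lt hx.2 ha1⟩)
    have hFab : IntegrableOn F (Ioo a b) := hFint.mono_set
      (fun x hx => ⟨lt_trans ha0 hx.1, lt_trans hx.2 hb1⟩)
    have hFb : IntegrableOn F (Ico b 1) := hFint.mono_set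
      (fun x hx => ⟨lt_of_lt_of_le hb0 hx.1, hx.2⟩)
    have hFδ : IntegrableOn F (Ioc 0 δ) := hFint.mono_set
      (fun x hx => ⟨hx.1, lt_of_le_of_lt hx.2 hδ1⟩)
    have hdisj2 : Disjoint (Ioo a b) (Ico b 1) := by
      rw [Set.disjoint_left]
      rintro x ⟨_, h2⟩ ⟨h3, _⟩
      linarith
    have hdisj1 : Disjoint (Ioc (0:ℝ) a) (Ioo a b ∪ Ico b 1) := by
      rw [Set.disjoint_left]
      rintro x ⟨_, h2⟩ (⟨h3, _⟩ | ⟨h3, _⟩) <;> linarith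
    have hsum : ∫ r in Ioo (0:ℝ) 1, F r
        = (∫ r in Ioc 0 a, F r) + ((∫ r in Ioo a b, F r) + ∫ r in Ico b 1, F r) := by
      rw [h1set, setIntegral_union hdisj1 (measurableSet_Ioo.union measurableSet_Ico) hFa
        (hFab.union hFb), setIntegral_union hdisj2 measurableSet_Ico hFab hFb]
    -- bound left piece
    have eleft : |∫ r in Ioc (0:ℝ) a, F r| < ε := by
      calc |∫ r in Ioc (0:ℝ) a, F r| ≤ ∫ r in Ioc (0:ℝ) a, |F r| := by
            simpa [Real.norm_eq_abs] using
              norm_integral_le_integral_norm (μ := volume.restrict (Ioc (0:ℝ) a)) F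
        _ ≤ ∫ r in Ioc (0:ℝ) δ, |F r| := by
            apply setIntegral_mono_set hFδ.abs
            · filter_upwards with x using abs_nonneg _
            · exact HasSubset.Subset.eventuallyLE (Ioc_subset_Ioc le_rfl haδ.le)
        _ < ε := hδ
    have eright : |∫ r in Ico b (1:ℝ), F r| < ε := by
      calc |∫ r in Ico b (1:ℝ), F r| ≤ ∫ r in Ico b (1:ℝ), |F r| := by
            simpa [Real.norm_eq_abs] using
              norm_integral_le_integral_norm (μ := volume.restrict (Ico b (1:ℝ))) F
        _ < ε := hbtail
    have emid : -(ε) ≤ ∫ r in Ioo a b, F r := by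
      have := key a b haI hbI hab
      linarith
    have l1 : -(ε) ≤ ∫ r in Ioc (0:ℝ) a, F r := by
      have := abs_le.mp eleft.le
      linarith [this.1]
    have l3 : -(ε) ≤ ∫ r in Ico b (1:ℝ), F r := by
      have := abs_le.mp eright.le
      linarith [this.1]
    rw [hsum]
    linarith
  have hF0 : 0 ≤ ∫ r in Ioo (0:ℝ) 1, F r := by
    by_contra hcon
    push_neg at hcon
    have := main (-(∫ r in Ioo (0:ℝ) 1, F r)/6) (by linarith)
    linarith
  have hfin : ∫ r in Ioo (0:ℝ) 1, F r
      = (∫ r in Ioo (0:ℝ) 1, F₁ r) - C * ∫ r in Ioo (0:ℝ) 1, Q r := by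
    rw [hFdef]
    rw [integral_sub hint (hQint.const_mul C), integral_const_mul]
  linarith [hF0, hfin.symm.le, hfin.le]
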